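/- The set N = { x ∈ ℂ[Γ] : tr_χ(x* x) = 0 } is equal to the two-sided ideal of ℂ[Γ] generated by the elements z − χ(z)·1 for z ∈ Z. -/

import Mathlib

/-- The star operation on the complex group algebra `ℂ[Γ]`, determined by
`(a·g)* = conj(a)·g⁻¹`. -/
noncomputable def groupAlgebraStar {Γ : Type*} [Group Γ] (x : MonoidAlgebra ℂ Γ) :
    MonoidAlgebra ℂ Γ :=
  MonoidAlgebra.ofCoeff
    (Finsupp.mapDomain (fun g => g⁻¹) (Finsupp.mapRange (starRingEnd ℂ) (map_zero _) x.coeff))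

/-- The twisted trace `tr_χ : ℂ[Γ] → ℂ` associated to a character `χ : Z → ℂˣ` of a finite
central subgroup `Z ≤ Γ`: it is `ℂ`-linear with `tr_χ(g) = χ(g)` for `g ∈ Z` and
`tr_χ(g) = 0` for `g ∉ Z`; explicitly `tr_χ(x) = Σ_{z ∈ Z} x(z)·χ(z)`. -/
noncomputable def twistedTrace {Γ : Type*} [Group Γ] (Z : Subgroup Γ) [Fintype Z]
    (χ : Z →* ℂˣ) (x : MonoidAlgebra ℂ Γ) : ℂ :=
  ∑ z : Z, x.coeff ↑z * (χ z : ℂ)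

section
open MonoidAlgebra Finsupp
set_option linter.unusedSectionVars false

section
variable {Γ : Type*} [Group Γ]

@[simp] lemma ma_add_apply (x y : MonoidAlgebra ℂ Γ) (g : Γ) : (x + y).coeff g = x.coeff g + y.coeff g :=
  rfl

@[simp] lemma ma_smul_apply (c : ℂ) (x : MonoidAlgebra ℂ Γ) (g : Γ) : (c • x).coeff g = c * x.coeff g :=
  rfl

@[simp] lemma ma_neg_apply (x : MonoidAlgebra ℂ Γ) (g : Γ) : (-x).coeff g = -(x.coeff g) :=
  rfl

@[simp] lemma ma_sub_apply (x y : MonoidAlgebra ℂ Γ) (g : Γ) : (x - y).coeff g = x.coeff g - y.coeff g :=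
  rfl

@[simp] lemma ma_zero_apply (g : Γ) : (0 : MonoidAlgebra ℂ Γ).coeff g = 0 := rfl

@[simp] lemma ma_sum_apply {ι : Type*} (s : Finset ι) (f : ι → MonoidAlgebra ℂ Γ) (g : Γ) :
    (∑ i ∈ s, f i).coeff g = ∑ i ∈ s, (f i).coeff g := by
  rw [MonoidAlgebra.coeff_sum]; exact Finset.sum_apply' g

lemma gstar_apply (x : MonoidAlgebra ℂ Γ) (g : Γ) :
    (groupAlgebraStar x).coeff g = starRingEnd ℂ (x.coeff g⁻¹) := by
  have h := Finsupp.mapDomain_apply (f := fun g : Γ => g⁻¹)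
    (fun a b h => inv_injective h) (Finsupp.mapRange (starRingEnd ℂ) (map_zero _) x.coeff) g⁻¹
  simpa [groupAlgebraStar] using h

lemma gstar_single (g : Γ) (c : ℂ) :
    groupAlgebraStar (MonoidAlgebra.single g c : MonoidAlgebra ℂ Γ)
      = MonoidAlgebra.single g⁻¹ (starRingEnd ℂ c) := by
  ext h
  classical
  simp only [gstar_apply, MonoidAlgebra.single_apply]
  by_cases hh : g = h⁻¹
  · rw [if_pos hh, if_pos (by rw [hh]; simp)]
  · rw [if_neg hh, if_neg (by intro hc; exact hh (by rw [← hc]; simp)), map_zero]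

lemma gstar_zero : groupAlgebraStar (0 : MonoidAlgebra ℂ Γ) = 0 := by
  ext g; simp [gstar_apply]

lemma gstar_add (x y : MonoidAlgebra ℂ Γ) :
    groupAlgebraStar (x + y) = groupAlgebraStar x + groupAlgebraStar y := by
  ext g; simp [gstar_apply]

lemma gstar_smul (c : ℂ) (x : MonoidAlgebra ℂ Γ) :
    groupAlgebraStar (c • x) = (starRingEnd ℂ c) • groupAlgebraStar x := by
  ext g; simp [gstar_apply, map_mul]

lemma gstar_mul (a b : MonoidAlgebra ℂ Γ) :
    groupAlgebraStar (a * b) = groupAlgebraStar b * groupAlgebraStar a := by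
  induction a using MonoidAlgebra.induction_on with
  | add f g hf hg => simp [add_mul, gstar_add, hf, hg, mul_add]
  | smul r f hf => rw [smul_mul_assoc, gstar_smul, hf, gstar_smul, mul_smul_comm]
  | of g =>
    induction b using MonoidAlgebra.induction_on with
    | add f g' hf hg =>
        simp only [MonoidAlgebra.of_apply] at hf hg
        simp [mul_add, gstar_add, hf, hg, add_mul]
    | smul r f hf => rw [mul_smul_comm, gstar_smul, hf, gstar_smul, smul_mul_assoc]
    | of h =>
      simp only [MonoidAlgebra.of_apply]
      rw [MonoidAlgebra.single_mul_single, gstar_single, gstar_single, gstar_single,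
        MonoidAlgebra.single_mul_single, mul_inv_rev]
      simp

lemma tr0_cyclic (a b : MonoidAlgebra ℂ Γ) : (a * b).coeff 1 = (b * a).coeff 1 := by
  induction a using MonoidAlgebra.induction_on with
  | add f g hf hg => simp [add_mul, mul_add, hf, hg]
  | smul r f hf => rw [smul_mul_assoc, mul_smul_comm, ma_smul_apply, ma_smul_apply, hf]
  | of g =>
    induction b using MonoidAlgebra.induction_on with
    | add f g' hf hg =>
        simp only [MonoidAlgebra.of_apply] at hf hg
        simp [mul_add, add_mul, hf, hg]
    | smul r f hf => rw [smul_mul_assoc, mul_smul_comm, ma_smul_apply, ma_smul_apply, hf]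
    | of h =>
      simp only [MonoidAlgebra.of_apply]
      rw [MonoidAlgebra.single_mul_single, MonoidAlgebra.single_mul_single]
      classical
      simp only [MonoidAlgebra.single_apply, mul_one]
      by_cases hh : g * h = 1
      · rw [if_pos hh, if_pos (by rw [mul_eq_one_iff_inv_eq] at hh ⊢; rw [← hh]; simp)]
      · rw [if_neg hh, if_neg (fun hc => hh (by rw [mul_eq_one_iff_inv_eq] at hc ⊢; rw [← hc]; simp))]
end
section
variable {Γ : Type*} [Group Γ] (Z : Subgroup Γ) [Fintype Z] (χ : Z →* ℂˣ)

noncomputable def eIdem : MonoidAlgebra ℂ Γ :=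
  (Fintype.card Z : ℂ)⁻¹ • ∑ z : Z, MonoidAlgebra.single (z : Γ) (((χ z)⁻¹ : ℂˣ) : ℂ)

lemma card_ne : (Fintype.card Z : ℂ) ≠ 0 := by
  simp [Fintype.card_ne_zero]

lemma conj_chi (z : Z) : starRingEnd ℂ ((χ z : ℂ)) = ((χ z : ℂ))⁻¹ := by
  have hpow : (χ z : ℂ) ^ (Fintype.card Z) = 1 := by
    rw [← Units.val_pow_eq_pow_val, ← map_pow, pow_card_eq_one, map_one, Units.val_one]
  have hn : ‖(χ z : ℂ)‖ = 1 :=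
    Complex.norm_eq_one_of_pow_eq_one hpow Fintype.card_ne_zero
  exact (Complex.inv_eq_conj hn).symm

lemma single_mul_e (z : Z) :
    MonoidAlgebra.single (z : Γ) (1 : ℂ) * eIdem Z χ = (χ z : ℂ) • eIdem Z χ := by
  unfold eIdem
  rw [mul_smul_comm, smul_comm, Finset.mul_sum]
  congr 1
  calc ∑ w : Z, MonoidAlgebra.single (z : Γ) (1:ℂ) * MonoidAlgebra.single (w : Γ) (((χ w)⁻¹ : ℂˣ) : ℂ)
      = ∑ w : Z, (χ z : ℂ) • MonoidAlgebra.single (((z * w : Z) : Γ)) (((χ (z * w))⁻¹ : ℂˣ) : ℂ) := by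
        apply Finset.sum_congr rfl
        intro w _
        rw [MonoidAlgebra.single_mul_single, MonoidAlgebra.smul_single', Subgroup.coe_mul, one_mul]
        congr 1
        rw [map_mul, mul_inv_rev]
        simp only [Units.val_mul, Units.val_inv_eq_inv_val]
        field_simp
    _ = (χ z : ℂ) • ∑ w : Z, MonoidAlgebra.single ((w : Γ)) (((χ w)⁻¹ : ℂˣ) : ℂ) := by
        rw [← Finset.smul_sum]
        congr 1
        exact Fintype.sum_equiv (Equiv.mulLeft z) _ _ (fun w => rfl)

lemma e_mul_e : eIdem Z χ * eIdem Z χ = eIdem Z χ := by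
  have key : ∀ z : Z,
      MonoidAlgebra.single (z : Γ) (((χ z)⁻¹ : ℂˣ) : ℂ) * eIdem Z χ = eIdem Z χ := by
    intro z
    rw [show MonoidAlgebra.single (z : Γ) (((χ z)⁻¹ : ℂˣ) : ℂ)
          = (((χ z)⁻¹ : ℂˣ) : ℂ) • MonoidAlgebra.single (z : Γ) (1:ℂ) by
          rw [MonoidAlgebra.smul_single', mul_one],
      smul_mul_assoc, single_mul_e, smul_smul, Units.val_inv_eq_inv_val,
      inv_mul_cancel₀ (Units.ne_zero _), one_smul]
  nth_rewrite 1 [eIdem]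
  rw [smul_mul_assoc, Finset.sum_mul]
  simp_rw [key]
  rw [Finset.sum_const, Finset.card_univ, ← Nat.cast_smul_eq_nsmul ℂ, smul_smul,
    inv_mul_cancel₀ (card_ne Z), one_smul]

lemma e_central (hZ : Z ≤ Subgroup.center Γ) (a : MonoidAlgebra ℂ Γ) :
    a * eIdem Z χ = eIdem Z χ * a := by
  unfold eIdem
  rw [mul_smul_comm, smul_mul_assoc, Finset.mul_sum, Finset.sum_mul]
  congr 1
  apply Finset.sum_congr rfl
  intro z _
  ext g
  rw [MonoidAlgebra.mul_single_apply, MonoidAlgebra.single_mul_apply, mul_comm]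
  congr 2
  have hc : ((z : Γ))⁻¹ ∈ Subgroup.center Γ := (Subgroup.center Γ).inv_mem (hZ z.2)
  exact Subgroup.mem_center_iff.mp hc g
end

section
variable {Γ : Type*} [Group Γ] (Z : Subgroup Γ) [Fintype Z] (χ : Z →* ℂˣ)

lemma gstar_sum {ι : Type*} (s : Finset ι) (f : ι → MonoidAlgebra ℂ Γ) :
    groupAlgebraStar (∑ i ∈ s, f i) = ∑ i ∈ s, groupAlgebraStar (f i) := by
  classical
  induction s using Finset.induction with
  | empty => simp [gstar_zero]
  | insert _ _ h ih => rw [Finset.sum_insert h, Finset.sum_insert h, gstar_add, ih]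

lemma gstar_e : groupAlgebraStar (eIdem Z χ) = eIdem Z χ := by
  unfold eIdem
  rw [gstar_smul, gstar_sum]
  have hc : starRingEnd ℂ ((Fintype.card Z : ℂ))⁻¹ = (Fintype.card Z : ℂ)⁻¹ := by
    rw [map_inv₀, Complex.conj_natCast]
  rw [hc]
  congr 1
  have step : ∀ z : Z, groupAlgebraStar (MonoidAlgebra.single ((z : Γ)) (((χ z)⁻¹ : ℂˣ) : ℂ))
      = MonoidAlgebra.single (((z⁻¹ : Z) : Γ)) (((χ z⁻¹)⁻¹ : ℂˣ) : ℂ) := by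
    intro z
    rw [gstar_single]
    congr 1
    rw [map_inv, inv_inv, Units.val_inv_eq_inv_val, map_inv₀, conj_chi, inv_inv]
  simp_rw [step]
  exact Fintype.sum_equiv (Equiv.inv Z) _ _ (fun z => rfl)

lemma tr_e (a : MonoidAlgebra ℂ Γ) :
    twistedTrace Z χ a = (Fintype.card Z : ℂ) * ((a * eIdem Z χ).coeff 1) := by
  unfold twistedTrace eIdem
  rw [mul_smul_comm, ma_smul_apply, Finset.mul_sum, ma_sum_apply]
  simp_rw [MonoidAlgebra.mul_single_apply, one_mul]
  rw [← mul_assoc, mul_inv_cancel₀ (card_ne Z), one_mul]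
  exact Fintype.sum_equiv (Equiv.inv Z) _ _ (fun z => by
    simp [map_inv])

lemma tr0_gstar (a b : MonoidAlgebra ℂ Γ) :
    (groupAlgebraStar a * b).coeff 1 = ∑ g ∈ b.coeff.support, starRingEnd ℂ (a.coeff g) * b.coeff g := by
  conv_lhs => rw [← MonoidAlgebra.sum_single b, Finsupp.sum]
  rw [Finset.mul_sum, ma_sum_apply]
  apply Finset.sum_congr rfl
  intro g _
  rw [MonoidAlgebra.mul_single_apply, one_mul, gstar_apply, inv_inv]

lemma tw_formula (x : MonoidAlgebra ℂ Γ) : twistedTrace Z χ (groupAlgebraStar x * x)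
    = (Fintype.card Z : ℂ) * ∑ g ∈ (x * eIdem Z χ).coeff.support,
        starRingEnd ℂ ((x * eIdem Z χ).coeff g) * (x * eIdem Z χ).coeff g := by
  rw [tr_e]
  congr 1
  rw [← tr0_gstar, gstar_mul, gstar_e, mul_assoc (groupAlgebraStar x) x (eIdem Z χ)]
  conv_rhs => rw [mul_assoc, tr0_cyclic, mul_assoc, mul_assoc, e_mul_e]

lemma N_iff (x : MonoidAlgebra ℂ Γ) :
    twistedTrace Z χ (groupAlgebraStar x * x) = 0 ↔ x * eIdem Z χ = 0 := by
  rw [tw_formula]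
  constructor
  · intro h
    rcases mul_eq_zero.mp h with h | h
    · exact absurd h (card_ne Z)
    · set y := x * eIdem Z χ with hy
      have h2 : ((∑ g ∈ y.coeff.support, Complex.normSq (y.coeff g) : ℝ) : ℂ) = 0 := by
        push_cast
        rw [← h]
        exact Finset.sum_congr rfl (fun g _ => Complex.normSq_eq_conj_mul_self)
      have h2' : ∑ g ∈ y.coeff.support, Complex.normSq (y.coeff g) = 0 := by exact_mod_cast h2
      have h3 := (Finset.sum_eq_zero_iff_of_nonneg
        (fun g _ => Complex.normSq_nonneg _)).mp h2'
      ext g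
      by_cases hg : g ∈ y.coeff.support
      · simpa using Complex.normSq_eq_zero.mp (h3 g hg)
      · simpa using Finsupp.notMem_support_iff.mp hg
  · intro h
    rw [h]
    simp

lemma e_sub_one : eIdem Z χ - 1
    = (Fintype.card Z : ℂ)⁻¹ • ∑ z : Z,
        (((χ z)⁻¹ : ℂˣ) : ℂ) • (MonoidAlgebra.of ℂ Γ (z : Γ) - (χ z : ℂ) • 1) := by
  have : ∀ z : Z, (((χ z)⁻¹ : ℂˣ) : ℂ) • (MonoidAlgebra.of ℂ Γ (z : Γ) - (χ z : ℂ) • 1)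
      = MonoidAlgebra.single (z : Γ) (((χ z)⁻¹ : ℂˣ) : ℂ) - 1 := by
    intro z
    rw [smul_sub, smul_smul, Units.val_inv_eq_inv_val,
      inv_mul_cancel₀ (Units.ne_zero _), one_smul, MonoidAlgebra.of_apply, MonoidAlgebra.smul_single', mul_one]
  simp_rw [this, Finset.sum_sub_distrib, smul_sub, eIdem]
  congr 1
  rw [Finset.sum_const, Finset.card_univ, ← Nat.cast_smul_eq_nsmul ℂ, smul_smul,
    inv_mul_cancel₀ (card_ne Z), one_smul]
end

end

open MonoidAlgebra Finsupp in
/-- The set `N = { x ∈ ℂ[Γ] : tr_χ(x* x) = 0 }` equals the two-sided ideal of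
`ℂ[Γ]` generated by the elements `z − χ(z)·1` for `z ∈ Z`. -/
theorem kernel_twistedTrace_eq_span {Γ : Type*} [Group Γ] (Z : Subgroup Γ)
    (hZ : Z ≤ Subgroup.center Γ) [Fintype Z] (χ : Z →* ℂˣ) :
    {x : MonoidAlgebra ℂ Γ | twistedTrace Z χ (groupAlgebraStar x * x) = 0} =
      (TwoSidedIdeal.span
        {y : MonoidAlgebra ℂ Γ | ∃ z : Z,
          y = MonoidAlgebra.of ℂ Γ (z : Γ) - (χ z : ℂ) • 1} : Set (MonoidAlgebra ℂ Γ)) := by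
  classical
  set S : Set (MonoidAlgebra ℂ Γ) :=
    {y : MonoidAlgebra ℂ Γ | ∃ z : Z, y = MonoidAlgebra.of ℂ Γ (z : Γ) - (χ z : ℂ) • 1} with hS
  set I := TwoSidedIdeal.span S with hI
  have hsmul_mem : ∀ (c : ℂ) (m : MonoidAlgebra ℂ Γ), m ∈ I → c • m ∈ I := by
    intro c m hm
    rw [← one_mul m, ← smul_mul_assoc]
    exact I.mul_mem_left _ _ hm
  ext x
  simp only [Set.mem_setOf_eq, SetLike.mem_coe]
  rw [N_iff]
  constructor
  · intro h
    have hx : x = -(x * (eIdem Z χ - 1)) := by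
      rw [mul_sub, h, mul_one, zero_sub, neg_neg]
    rw [hx, e_sub_one]
    apply neg_mem
    rw [mul_smul_comm]
    apply hsmul_mem
    rw [Finset.mul_sum]
    apply sum_mem
    intro z _
    rw [mul_smul_comm]
    exact hsmul_mem _ _ (I.mul_mem_left _ _ (TwoSidedIdeal.subset_span ⟨z, rfl⟩))
  · intro h
    let K : TwoSidedIdeal (MonoidAlgebra ℂ Γ) :=
      TwoSidedIdeal.mk' {x : MonoidAlgebra ℂ Γ | x * eIdem Z χ = 0}
        (by simp)
        (fun {a b} ha hb => by simp only [Set.mem_setOf_eq] at *; rw [add_mul, ha, hb, add_zero])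
        (fun {a} ha => by simp only [Set.mem_setOf_eq] at *; rw [neg_mul, ha, neg_zero])
        (fun {a b} hb => by simp only [Set.mem_setOf_eq] at *; rw [mul_assoc, hb, mul_zero])
        (fun {a b} ha => by
          simp only [Set.mem_setOf_eq] at *
          rw [mul_assoc, e_central Z χ hZ, ← mul_assoc, ha, zero_mul])
    have hSK : S ⊆ K := by
      rintro y ⟨z, rfl⟩
      rw [SetLike.mem_coe, TwoSidedIdeal.mem_mk', Set.mem_setOf_eq, sub_mul,
        MonoidAlgebra.of_apply, single_mul_e, smul_mul_assoc, one_mul, sub_self]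
    have := TwoSidedIdeal.mem_span_iff.mp h K hSK
    rw [TwoSidedIdeal.mem_mk'] at this
    exact this
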